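/- Let M be a commutative cocommutative bialgebra over R and r an R-valued bicharacter of M. Then the new multiplication a∘b = Σ a'b' r(a''⊗b'') (where Δ(a) = Σa'⊗a'', Δ(b) = Σb'⊗b'') makes the underlying R-module of M into an associative ring with identity 1. -/

import Mathlib

open TensorProduct Coalgebra

/-- An `R`-valued bicharacter of a bialgebra `M` over `R`. -/
structure Bicharacter (R M : Type) [CommRing R] [Ring M] [Bialgebra R M] where
  toFun : M →ₗ[R] M →ₗ[R] R
  one_left : ∀ a : M, toFun 1 a = counit (R := R) a
  one_right : ∀ a : M, toFun a 1 = counit (R := R) a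
  mul_left : ∀ (a b c : M) (ι : Type) (t : Finset ι) (c₁ c₂ : ι → M),
    comul (R := R) c = ∑ i ∈ t, c₁ i ⊗ₜ[R] c₂ i →
    toFun (a * b) c = ∑ i ∈ t, toFun a (c₁ i) * toFun b (c₂ i)
  mul_right : ∀ (a b c : M) (ι : Type) (t : Finset ι) (a₁ a₂ : ι → M),
    comul (R := R) a = ∑ i ∈ t, a₁ i ⊗ₜ[R] a₂ i →
    toFun a (b * c) = ∑ i ∈ t, toFun (a₁ i) b * toFun (a₂ i) c

/-- `mul` is the twisted multiplication `a ∘ b = Σ a'b' r(a''⊗b'')`. -/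
def IsTwistedMul (R M : Type) [CommRing R] [CommRing M] [Bialgebra R M]
    (r : Bicharacter R M) (mul : M →ₗ[R] M →ₗ[R] M) : Prop :=
  ∀ (a b : M) (ι κ : Type) (t : Finset ι) (u : Finset κ)
    (a₁ a₂ : ι → M) (b₁ b₂ : κ → M),
    comul (R := R) a = ∑ i ∈ t, a₁ i ⊗ₜ[R] a₂ i →
    comul (R := R) b = ∑ j ∈ u, b₁ j ⊗ₜ[R] b₂ j →
    mul a b = ∑ i ∈ t, ∑ j ∈ u, r.toFun (a₂ i) (b₂ j) • (a₁ i * b₁ j)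

section Aux

variable {R M : Type} [CommRing R] [CommRing M] [Bialgebra R M]

/-- generic trilinear helper: (α₁,α₂,α₃) ↦ (c * f α₂ * g α₃) • (α₁ * d) -/
noncomputable def phi3 (f g : M →ₗ[R] R) (c : R) (d : M) :
    M →ₗ[R] M →ₗ[R] M →ₗ[R] M :=
  LinearMap.mk₂ R (fun α₁ α₂ => g.smulRight ((c * f α₂) • (α₁ * d)))
    (fun x y z => by ext w; simp [add_mul, smul_add])
    (fun s x y => by
      ext w
      simp only [LinearMap.smulRight_apply, LinearMap.smul_apply]
      simp [smul_smul, mul_assoc, mul_comm, mul_left_comm])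
    (fun x y z => by ext w; simp [mul_add, add_smul, smul_add])
    (fun s x y => by
      ext w
      simp only [LinearMap.smulRight_apply, LinearMap.smul_apply, map_smul,
        smul_eq_mul, smul_smul]
      ring_nf)

@[simp] lemma phi3_apply (f g : M →ₗ[R] R) (c : R) (d : M) (x y z : M) :
    phi3 f g c d x y z = (c * f y * g z) • (x * d) := by
  simp only [phi3, LinearMap.mk₂_apply, LinearMap.smulRight_apply, smul_smul]
  ring_nf

noncomputable def G3 (f g : M →ₗ[R] R) (c : R) (d : M) :
    M ⊗[R] (M ⊗[R] M) →ₗ[R] M :=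
  TensorProduct.lift ((TensorProduct.uncurry (RingHom.id R) M M M) ∘ₗ phi3 f g c d)

@[simp] lemma G3_tmul (f g : M →ₗ[R] R) (c : R) (d : M) (x y z : M) :
    G3 f g c d (x ⊗ₜ[R] (y ⊗ₜ[R] z)) = (c * f y * g z) • (x * d) := by
  simp [G3]

/-- lift of the bicharacter to the tensor product -/
noncomputable def bchar (r : Bicharacter R M) : M ⊗[R] M →ₗ[R] R :=
  TensorProduct.lift r.toFun

/-- the map ((a₁⊗a₂)⊗(b₁⊗b₂)) ↦ r(a₂⊗b₂) • a₁b₁ -/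
noncomputable def Gmap (r : Bicharacter R M) :
    (M ⊗[R] M) ⊗[R] (M ⊗[R] M) →ₗ[R] M :=
  (TensorProduct.rid R M).toLinearMap ∘ₗ
    (TensorProduct.map (LinearMap.mul' R M) (bchar r)) ∘ₗ
    (TensorProduct.tensorTensorTensorComm R M M M M).toLinearMap

@[simp] lemma Gmap_tmul (r : Bicharacter R M) (a₁ a₂ b₁ b₂ : M) :
    Gmap r ((a₁ ⊗ₜ[R] a₂) ⊗ₜ[R] (b₁ ⊗ₜ[R] b₂)) = r.toFun a₂ b₂ • (a₁ * b₁) := by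
  simp [Gmap, bchar]

/-- the twisted multiplication -/
noncomputable def tw (r : Bicharacter R M) : M →ₗ[R] M →ₗ[R] M :=
  TensorProduct.curry ((Gmap r) ∘ₗ TensorProduct.map (comul (R := R)) (comul (R := R)))

lemma tw_apply (r : Bicharacter R M) (a b : M) :
    tw r a b = Gmap r (comul (R := R) a ⊗ₜ[R] comul (R := R) b) := rfl

lemma tw_repr (r : Bicharacter R M) (a b : M) {ι κ : Type} (t : Finset ι) (u : Finset κ)
    (a₁ a₂ : ι → M) (b₁ b₂ : κ → M)
    (ha : comul (R := R) a = ∑ i ∈ t, a₁ i ⊗ₜ[R] a₂ i)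
    (hb : comul (R := R) b = ∑ j ∈ u, b₁ j ⊗ₜ[R] b₂ j) :
    tw r a b = ∑ i ∈ t, ∑ j ∈ u, r.toFun (a₂ i) (b₂ j) • (a₁ i * b₁ j) := by
  rw [tw_apply, ha, hb]
  simp only [TensorProduct.sum_tmul, TensorProduct.tmul_sum, map_sum, Gmap_tmul]
  exact Finset.sum_comm

/-- a chosen representation of the comultiplication -/
noncomputable def rep (R : Type) {M : Type} [CommRing R] [CommRing M] [Bialgebra R M]
    (z : M) : Finset (M × M) :=
  (TensorProduct.exists_finset (R := R) (comul (R := R) z)).choose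

lemma hrep (R : Type) {M : Type} [CommRing R] [CommRing M] [Bialgebra R M] (z : M) :
    comul (R := R) z = ∑ e ∈ rep R z, e.1 ⊗ₜ[R] e.2 :=
  (TensorProduct.exists_finset (R := R) (comul (R := R) z)).choose_spec

lemma tw_rep (r : Bicharacter R M) (x y : M) :
    tw r x y = ∑ e ∈ rep R x, ∑ f ∈ rep R y, r.toFun e.2 f.2 • (e.1 * f.1) :=
  tw_repr r x y _ _ _ _ _ _ (hrep R x) (hrep R y)

lemma comul_mul_rep (x y : M) :
    comul (R := R) (x * y)
      = ∑ g ∈ rep R x, ∑ h ∈ rep R y, (g.1 * h.1) ⊗ₜ[R] (g.2 * h.2) := by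
  rw [Bialgebra.comul_mul, hrep R x, hrep R y, Finset.sum_mul_sum]
  simp [Algebra.TensorProduct.tmul_mul_tmul]

lemma tw_mul_rep (r : Bicharacter R M) (x y c : M) :
    tw r (x * y) c = ∑ g ∈ rep R x, ∑ h ∈ rep R y, ∑ o ∈ rep R c,
      r.toFun (g.2 * h.2) o.2 • (g.1 * h.1 * o.1) := by
  rw [tw_apply, comul_mul_rep, hrep R c]
  simp only [TensorProduct.sum_tmul, TensorProduct.tmul_sum, map_sum, Gmap_tmul]
  rw [Finset.sum_comm]
  exact Finset.sum_congr rfl fun _ _ => Finset.sum_comm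

lemma tw_rep_mul (r : Bicharacter R M) (a x y : M) :
    tw r a (x * y) = ∑ e ∈ rep R a, ∑ h ∈ rep R x, ∑ oo ∈ rep R y,
      r.toFun e.2 (h.2 * oo.2) • (e.1 * (h.1 * oo.1)) := by
  rw [tw_apply, comul_mul_rep, hrep R a]
  simp only [TensorProduct.sum_tmul, TensorProduct.tmul_sum, map_sum, Gmap_tmul, mul_assoc]
  exact Eq.trans (Finset.sum_congr rfl fun _ _ => Finset.sum_comm) Finset.sum_comm

lemma counit_rep (z : M) :
    ∑ e ∈ rep R z, counit (R := R) e.2 • e.1 = z := by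
  have h : (counit (R := R)).lTensor M (comul (R := R) z) = z ⊗ₜ[R] 1 :=
    Coalgebra.lTensor_counit_comul z
  rw [hrep R z] at h
  have h2 := congrArg (TensorProduct.rid R M) h
  simpa [map_sum] using h2

/-- coassociativity at the level of the chosen representations -/
lemma repA (z : M) :
    ∑ e ∈ rep R z, ∑ g ∈ rep R e.1, g.1 ⊗ₜ[R] (g.2 ⊗ₜ[R] e.2)
      = ∑ e ∈ rep R z, ∑ g ∈ rep R e.2, e.1 ⊗ₜ[R] (g.1 ⊗ₜ[R] g.2) := by
  have h := Coalgebra.coassoc_apply (R := R) (A := M) z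
  rw [hrep R z] at h
  simp only [map_sum, LinearMap.rTensor_tmul, LinearMap.lTensor_tmul] at h
  calc ∑ e ∈ rep R z, ∑ g ∈ rep R e.1, g.1 ⊗ₜ[R] (g.2 ⊗ₜ[R] e.2)
      = ∑ e ∈ rep R z, TensorProduct.assoc R M M M ((comul (R := R) e.1) ⊗ₜ[R] e.2) := by
        refine Finset.sum_congr rfl fun e _ => ?_
        rw [hrep R e.1]
        simp [TensorProduct.sum_tmul, map_sum]
    _ = ∑ e ∈ rep R z, e.1 ⊗ₜ[R] comul (R := R) e.2 := h
    _ = ∑ e ∈ rep R z, ∑ g ∈ rep R e.2, e.1 ⊗ₜ[R] (g.1 ⊗ₜ[R] g.2) := by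
        refine Finset.sum_congr rfl fun e _ => ?_
        rw [hrep R e.2, TensorProduct.tmul_sum]

/-- cocommutativity at the level of the chosen representations -/
lemma repB (hcoc : ∀ a : M, TensorProduct.comm R M M (comul (R := R) a) = comul (R := R) a)
    (z : M) :
    ∑ g ∈ rep R z, g.1 ⊗ₜ[R] g.2 = ∑ g ∈ rep R z, g.2 ⊗ₜ[R] g.1 := by
  have h := hcoc z
  rw [hrep R z] at h
  simpa [map_sum] using h.symm

/-- coassociativity + cocommutativity -/
lemma repAB (hcoc : ∀ a : M, TensorProduct.comm R M M (comul (R := R) a) = comul (R := R) a)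
    (z : M) :
    ∑ e ∈ rep R z, ∑ g ∈ rep R e.1, g.1 ⊗ₜ[R] (g.2 ⊗ₜ[R] e.2)
      = ∑ e ∈ rep R z, ∑ g ∈ rep R e.2, e.1 ⊗ₜ[R] (g.2 ⊗ₜ[R] g.1) := by
  rw [repA z]
  refine Finset.sum_congr rfl fun e _ => ?_
  rw [← TensorProduct.tmul_sum, ← TensorProduct.tmul_sum, repB hcoc e.2]

lemma apply_ident (Φ : M ⊗[R] (M ⊗[R] M) →ₗ[R] M) {s : Finset (M × M)}
    {t t' : M × M → Finset (M × M)} {u u' : M × M → M × M → M ⊗[R] (M ⊗[R] M)}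
    (h : ∑ e ∈ s, ∑ g ∈ t e, u e g = ∑ e ∈ s, ∑ g ∈ t' e, u' e g) :
    ∑ e ∈ s, ∑ g ∈ t e, Φ (u e g) = ∑ e ∈ s, ∑ g ∈ t' e, Φ (u' e g) := by
  simp only [← map_sum]
  exact congrArg Φ h

/-- block rotation of six nested sums -/
lemma rot {α β γ α' β' γ' N : Type*} [AddCommMonoid N]
    (s₁ : Finset α) (t₁ : α → Finset α') (s₂ : Finset β) (t₂ : β → Finset β')
    (s₃ : Finset γ) (t₃ : γ → Finset γ')
    (F : α → α' → β → β' → γ → γ' → N) :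
    ∑ e ∈ s₁, ∑ g ∈ t₁ e, ∑ f ∈ s₂, ∑ h ∈ t₂ f, ∑ o ∈ s₃, ∑ m ∈ t₃ o, F e g f h o m
      = ∑ f ∈ s₂, ∑ h ∈ t₂ f, ∑ o ∈ s₃, ∑ m ∈ t₃ o, ∑ e ∈ s₁, ∑ g ∈ t₁ e,
          F e g f h o m := by
  calc ∑ e ∈ s₁, ∑ g ∈ t₁ e, ∑ f ∈ s₂, ∑ h ∈ t₂ f, ∑ o ∈ s₃, ∑ m ∈ t₃ o, F e g f h o m
      = ∑ p ∈ s₁.sigma t₁, ∑ f ∈ s₂, ∑ h ∈ t₂ f, ∑ o ∈ s₃, ∑ m ∈ t₃ o,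
          F p.1 p.2 f h o m := Finset.sum_sigma' s₁ t₁ _
    _ = ∑ f ∈ s₂, ∑ p ∈ s₁.sigma t₁, ∑ h ∈ t₂ f, ∑ o ∈ s₃, ∑ m ∈ t₃ o,
          F p.1 p.2 f h o m := Finset.sum_comm
    _ = ∑ f ∈ s₂, ∑ h ∈ t₂ f, ∑ p ∈ s₁.sigma t₁, ∑ o ∈ s₃, ∑ m ∈ t₃ o,
          F p.1 p.2 f h o m :=
        Finset.sum_congr rfl fun f _ => Finset.sum_comm
    _ = ∑ f ∈ s₂, ∑ h ∈ t₂ f, ∑ o ∈ s₃, ∑ p ∈ s₁.sigma t₁, ∑ m ∈ t₃ o,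
          F p.1 p.2 f h o m :=
        Finset.sum_congr rfl fun f _ => Finset.sum_congr rfl fun h _ => Finset.sum_comm
    _ = ∑ f ∈ s₂, ∑ h ∈ t₂ f, ∑ o ∈ s₃, ∑ m ∈ t₃ o, ∑ p ∈ s₁.sigma t₁,
          F p.1 p.2 f h o m :=
        Finset.sum_congr rfl fun f _ => Finset.sum_congr rfl fun h _ =>
          Finset.sum_congr rfl fun o _ => Finset.sum_comm
    _ = ∑ f ∈ s₂, ∑ h ∈ t₂ f, ∑ o ∈ s₃, ∑ m ∈ t₃ o, ∑ e ∈ s₁, ∑ g ∈ t₁ e,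
          F e g f h o m :=
        Finset.sum_congr rfl fun f _ => Finset.sum_congr rfl fun h _ =>
          Finset.sum_congr rfl fun o _ => Finset.sum_congr rfl fun m _ =>
            (Finset.sum_sigma' s₁ t₁ (fun e g => F e g f h o m)).symm

end Aux

section Assoc
variable {R M : Type} [CommRing R] [CommRing M] [Bialgebra R M]

lemma tw_assoc (r : Bicharacter R M)
    (hcoc : ∀ a : M, TensorProduct.comm R M M (comul (R := R) a) = comul (R := R) a)
    (a b c : M) : tw r (tw r a b) c = tw r a (tw r b c) := by
  have hL : tw r (tw r a b) c
      = ∑ e ∈ rep R a, ∑ g ∈ rep R e.2, ∑ f ∈ rep R b, ∑ h ∈ rep R f.2,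
          ∑ o ∈ rep R c, ∑ m ∈ rep R o.2,
          (r.toFun g.2 m.1 * r.toFun h.1 m.2 * r.toFun g.1 h.2) • (f.1 * (e.1 * o.1)) := by
    calc tw r (tw r a b) c
        = ∑ e ∈ rep R a, ∑ f ∈ rep R b, r.toFun e.2 f.2 • tw r (e.1 * f.1) c := by
          rw [tw_rep r a b]
          simp only [map_sum, LinearMap.sum_apply, map_smul, LinearMap.smul_apply]
      _ = ∑ e ∈ rep R a, ∑ f ∈ rep R b, ∑ g ∈ rep R e.1, ∑ h ∈ rep R f.1,
            ∑ o ∈ rep R c,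
            (r.toFun e.2 f.2 * r.toFun (g.2 * h.2) o.2) • (g.1 * h.1 * o.1) := by
          refine Finset.sum_congr rfl fun e _ => Finset.sum_congr rfl fun f _ => ?_
          rw [tw_mul_rep]
          simp only [Finset.smul_sum, smul_smul]
      _ = ∑ e ∈ rep R a, ∑ f ∈ rep R b, ∑ g ∈ rep R e.1, ∑ h ∈ rep R f.1,
            ∑ o ∈ rep R c, ∑ m ∈ rep R o.2,
            (r.toFun e.2 f.2 * (r.toFun g.2 m.1 * r.toFun h.2 m.2)) • (g.1 * h.1 * o.1) := by
          refine Finset.sum_congr rfl fun e _ => Finset.sum_congr rfl fun f _ =>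
            Finset.sum_congr rfl fun g _ => Finset.sum_congr rfl fun h _ =>
            Finset.sum_congr rfl fun o _ => ?_
          rw [r.mul_left g.2 h.2 o.2 (M × M) (rep R o.2) Prod.fst Prod.snd (hrep R o.2),
            Finset.mul_sum, Finset.sum_smul]
      _ = ∑ e ∈ rep R a, ∑ g ∈ rep R e.1, ∑ f ∈ rep R b, ∑ h ∈ rep R f.1,
            ∑ o ∈ rep R c, ∑ m ∈ rep R o.2,
            (r.toFun e.2 f.2 * (r.toFun g.2 m.1 * r.toFun h.2 m.2)) • (g.1 * h.1 * o.1) :=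
          Finset.sum_congr rfl fun e _ => Finset.sum_comm
      _ = ∑ e ∈ rep R a, ∑ g ∈ rep R e.1,
            (∑ f ∈ rep R b, ∑ h ∈ rep R f.1, ∑ o ∈ rep R c, ∑ m ∈ rep R o.2,
              G3 (r.toFun.flip m.1) (r.toFun.flip f.2) (r.toFun h.2 m.2) (h.1 * o.1))
            (g.1 ⊗ₜ[R] (g.2 ⊗ₜ[R] e.2)) := by
          refine Finset.sum_congr rfl fun e _ => Finset.sum_congr rfl fun g _ => ?_
          simp only [LinearMap.sum_apply, G3_tmul, LinearMap.flip_apply]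
          refine Finset.sum_congr rfl fun f _ => Finset.sum_congr rfl fun h _ =>
            Finset.sum_congr rfl fun o _ => Finset.sum_congr rfl fun m _ => ?_
          congr 1
          · ring
          · ring
      _ = ∑ e ∈ rep R a, ∑ g ∈ rep R e.2,
            (∑ f ∈ rep R b, ∑ h ∈ rep R f.1, ∑ o ∈ rep R c, ∑ m ∈ rep R o.2,
              G3 (r.toFun.flip m.1) (r.toFun.flip f.2) (r.toFun h.2 m.2) (h.1 * o.1))
            (e.1 ⊗ₜ[R] (g.2 ⊗ₜ[R] g.1)) :=
          apply_ident _ (repAB hcoc a)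
      _ = ∑ e ∈ rep R a, ∑ g ∈ rep R e.2, ∑ f ∈ rep R b, ∑ h ∈ rep R f.1,
            ∑ o ∈ rep R c, ∑ m ∈ rep R o.2,
            (r.toFun h.2 m.2 * r.toFun g.2 m.1 * r.toFun g.1 f.2) • (e.1 * (h.1 * o.1)) := by
          simp only [LinearMap.sum_apply, G3_tmul, LinearMap.flip_apply]
      _ = ∑ e ∈ rep R a, ∑ g ∈ rep R e.2, ∑ f ∈ rep R b, ∑ h ∈ rep R f.2,
            ∑ o ∈ rep R c, ∑ m ∈ rep R o.2,
            (r.toFun g.2 m.1 * r.toFun h.1 m.2 * r.toFun g.1 h.2) • (f.1 * (e.1 * o.1)) := by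
          refine Finset.sum_congr rfl fun e _ => Finset.sum_congr rfl fun g _ => ?_
          calc ∑ f ∈ rep R b, ∑ h ∈ rep R f.1, ∑ o ∈ rep R c, ∑ m ∈ rep R o.2,
                (r.toFun h.2 m.2 * r.toFun g.2 m.1 * r.toFun g.1 f.2) • (e.1 * (h.1 * o.1))
              = ∑ f ∈ rep R b, ∑ h ∈ rep R f.1,
                  (∑ o ∈ rep R c, ∑ m ∈ rep R o.2,
                    G3 (r.toFun.flip m.2) (r.toFun g.1) (r.toFun g.2 m.1) (e.1 * o.1))
                  (h.1 ⊗ₜ[R] (h.2 ⊗ₜ[R] f.2)) := by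
                refine Finset.sum_congr rfl fun f _ => Finset.sum_congr rfl fun h _ => ?_
                simp only [LinearMap.sum_apply, G3_tmul, LinearMap.flip_apply]
                refine Finset.sum_congr rfl fun o _ => Finset.sum_congr rfl fun m _ => ?_
                congr 1
                · ring
                · ring
            _ = ∑ f ∈ rep R b, ∑ h ∈ rep R f.2,
                  (∑ o ∈ rep R c, ∑ m ∈ rep R o.2,
                    G3 (r.toFun.flip m.2) (r.toFun g.1) (r.toFun g.2 m.1) (e.1 * o.1))
                  (f.1 ⊗ₜ[R] (h.1 ⊗ₜ[R] h.2)) :=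
                apply_ident _ (repA b)
            _ = ∑ f ∈ rep R b, ∑ h ∈ rep R f.2, ∑ o ∈ rep R c, ∑ m ∈ rep R o.2,
                  (r.toFun g.2 m.1 * r.toFun h.1 m.2 * r.toFun g.1 h.2) • (f.1 * (e.1 * o.1)) := by
                simp only [LinearMap.sum_apply, G3_tmul, LinearMap.flip_apply]
  have hR : tw r a (tw r b c)
      = ∑ f ∈ rep R b, ∑ h ∈ rep R f.2, ∑ o ∈ rep R c, ∑ m ∈ rep R o.2,
          ∑ e ∈ rep R a, ∑ g ∈ rep R e.2,
          (r.toFun g.1 h.2 * r.toFun g.2 m.1 * r.toFun h.1 m.2) • (o.1 * (f.1 * e.1)) := by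
    calc tw r a (tw r b c)
        = ∑ f ∈ rep R b, ∑ o ∈ rep R c, r.toFun f.2 o.2 • tw r a (f.1 * o.1) := by
          rw [tw_rep r b c]
          simp only [map_sum, map_smul]
      _ = ∑ f ∈ rep R b, ∑ o ∈ rep R c, ∑ e ∈ rep R a, ∑ h ∈ rep R f.1,
            ∑ oo ∈ rep R o.1,
            (r.toFun f.2 o.2 * r.toFun e.2 (h.2 * oo.2)) • (e.1 * (h.1 * oo.1)) := by
          refine Finset.sum_congr rfl fun f _ => Finset.sum_congr rfl fun o _ => ?_
          rw [tw_rep_mul]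
          simp only [Finset.smul_sum, smul_smul]
      _ = ∑ f ∈ rep R b, ∑ o ∈ rep R c, ∑ e ∈ rep R a, ∑ h ∈ rep R f.1,
            ∑ oo ∈ rep R o.1, ∑ g ∈ rep R e.2,
            (r.toFun f.2 o.2 * (r.toFun g.1 h.2 * r.toFun g.2 oo.2)) • (e.1 * (h.1 * oo.1)) := by
          refine Finset.sum_congr rfl fun f _ => Finset.sum_congr rfl fun o _ =>
            Finset.sum_congr rfl fun e _ => Finset.sum_congr rfl fun h _ =>
            Finset.sum_congr rfl fun oo _ => ?_
          rw [r.mul_right e.2 h.2 oo.2 (M × M) (rep R e.2) Prod.fst Prod.snd (hrep R e.2),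
            Finset.mul_sum, Finset.sum_smul]
      _ = ∑ f ∈ rep R b, ∑ o ∈ rep R c, ∑ h ∈ rep R f.1, ∑ e ∈ rep R a,
            ∑ oo ∈ rep R o.1, ∑ g ∈ rep R e.2,
            (r.toFun f.2 o.2 * (r.toFun g.1 h.2 * r.toFun g.2 oo.2)) • (e.1 * (h.1 * oo.1)) :=
          Finset.sum_congr rfl fun f _ => Finset.sum_congr rfl fun o _ => Finset.sum_comm
      _ = ∑ f ∈ rep R b, ∑ h ∈ rep R f.1, ∑ o ∈ rep R c, ∑ e ∈ rep R a,
            ∑ oo ∈ rep R o.1, ∑ g ∈ rep R e.2,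
            (r.toFun f.2 o.2 * (r.toFun g.1 h.2 * r.toFun g.2 oo.2)) • (e.1 * (h.1 * oo.1)) :=
          Finset.sum_congr rfl fun f _ => Finset.sum_comm
      _ = ∑ f ∈ rep R b, ∑ h ∈ rep R f.1, ∑ o ∈ rep R c, ∑ oo ∈ rep R o.1,
            ∑ e ∈ rep R a, ∑ g ∈ rep R e.2,
            (r.toFun f.2 o.2 * (r.toFun g.1 h.2 * r.toFun g.2 oo.2)) • (e.1 * (h.1 * oo.1)) :=
          Finset.sum_congr rfl fun f _ => Finset.sum_congr rfl fun h _ =>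
            Finset.sum_congr rfl fun o _ => Finset.sum_comm
      _ = ∑ f ∈ rep R b, ∑ h ∈ rep R f.1,
            (∑ o ∈ rep R c, ∑ oo ∈ rep R o.1, ∑ e ∈ rep R a, ∑ g ∈ rep R e.2,
              G3 (r.toFun g.1) (r.toFun.flip o.2) (r.toFun g.2 oo.2) (e.1 * oo.1))
            (h.1 ⊗ₜ[R] (h.2 ⊗ₜ[R] f.2)) := by
          refine Finset.sum_congr rfl fun f _ => Finset.sum_congr rfl fun h _ => ?_
          simp only [LinearMap.sum_apply, G3_tmul, LinearMap.flip_apply]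
          refine Finset.sum_congr rfl fun o _ => Finset.sum_congr rfl fun oo _ =>
            Finset.sum_congr rfl fun e _ => Finset.sum_congr rfl fun g _ => ?_
          congr 1
          · ring
          · ring
      _ = ∑ f ∈ rep R b, ∑ h ∈ rep R f.2,
            (∑ o ∈ rep R c, ∑ oo ∈ rep R o.1, ∑ e ∈ rep R a, ∑ g ∈ rep R e.2,
              G3 (r.toFun g.1) (r.toFun.flip o.2) (r.toFun g.2 oo.2) (e.1 * oo.1))
            (f.1 ⊗ₜ[R] (h.2 ⊗ₜ[R] h.1)) :=
          apply_ident _ (repAB hcoc b)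
      _ = ∑ f ∈ rep R b, ∑ h ∈ rep R f.2, ∑ o ∈ rep R c, ∑ oo ∈ rep R o.1,
            ∑ e ∈ rep R a, ∑ g ∈ rep R e.2,
            (r.toFun g.2 oo.2 * r.toFun g.1 h.2 * r.toFun h.1 o.2) • (f.1 * (e.1 * oo.1)) := by
          simp only [LinearMap.sum_apply, G3_tmul, LinearMap.flip_apply]
      _ = ∑ f ∈ rep R b, ∑ h ∈ rep R f.2, ∑ o ∈ rep R c, ∑ m ∈ rep R o.2,
            ∑ e ∈ rep R a, ∑ g ∈ rep R e.2,
            (r.toFun g.1 h.2 * r.toFun g.2 m.1 * r.toFun h.1 m.2) • (o.1 * (f.1 * e.1)) := by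
          refine Finset.sum_congr rfl fun f _ => Finset.sum_congr rfl fun h _ => ?_
          calc ∑ o ∈ rep R c, ∑ oo ∈ rep R o.1, ∑ e ∈ rep R a, ∑ g ∈ rep R e.2,
                (r.toFun g.2 oo.2 * r.toFun g.1 h.2 * r.toFun h.1 o.2) • (f.1 * (e.1 * oo.1))
              = ∑ o ∈ rep R c, ∑ oo ∈ rep R o.1,
                  (∑ e ∈ rep R a, ∑ g ∈ rep R e.2,
                    G3 (r.toFun g.2) (r.toFun h.1) (r.toFun g.1 h.2) (f.1 * e.1))
                  (oo.1 ⊗ₜ[R] (oo.2 ⊗ₜ[R] o.2)) := by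
                refine Finset.sum_congr rfl fun o _ => Finset.sum_congr rfl fun oo _ => ?_
                simp only [LinearMap.sum_apply, G3_tmul, LinearMap.flip_apply]
                refine Finset.sum_congr rfl fun e _ => Finset.sum_congr rfl fun g _ => ?_
                congr 1
                · ring
                · ring
            _ = ∑ o ∈ rep R c, ∑ m ∈ rep R o.2,
                  (∑ e ∈ rep R a, ∑ g ∈ rep R e.2,
                    G3 (r.toFun g.2) (r.toFun h.1) (r.toFun g.1 h.2) (f.1 * e.1))
                  (o.1 ⊗ₜ[R] (m.1 ⊗ₜ[R] m.2)) :=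
                apply_ident _ (repA c)
            _ = ∑ o ∈ rep R c, ∑ m ∈ rep R o.2, ∑ e ∈ rep R a, ∑ g ∈ rep R e.2,
                  (r.toFun g.1 h.2 * r.toFun g.2 m.1 * r.toFun h.1 m.2) • (o.1 * (f.1 * e.1)) := by
                simp only [LinearMap.sum_apply, G3_tmul, LinearMap.flip_apply]
  rw [hL, hR,
    rot (rep R a) (fun e => rep R e.2) (rep R b) (fun f => rep R f.2) (rep R c)
      (fun o => rep R o.2)
      (fun e g f h o m =>
        (r.toFun g.2 m.1 * r.toFun h.1 m.2 * r.toFun g.1 h.2) • (f.1 * (e.1 * o.1)))]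
  refine Finset.sum_congr rfl fun f _ => Finset.sum_congr rfl fun h _ =>
    Finset.sum_congr rfl fun o _ => Finset.sum_congr rfl fun m _ =>
    Finset.sum_congr rfl fun e _ => Finset.sum_congr rfl fun g _ => ?_
  congr 1
  · ring
  · ring

end Assoc

/-- Twisting a commutative cocommutative bialgebra `M` by an `R`-valued
bicharacter `r`, i.e. using the multiplication `a ∘ b = Σ a'b' r(a''⊗b'')`,
gives an associative ring with identity `1`. -/
theorem twisting_is_ring (R M : Type) [CommRing R] [CommRing M] [Bialgebra R M]
    (hcoc : ∀ a : M, TensorProduct.comm R M M (comul (R := R) a) = comul (R := R) a)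
    (r : Bicharacter R M) :
    ∃ mul : M →ₗ[R] M →ₗ[R] M, IsTwistedMul R M r mul ∧
      (∀ a b c : M, mul (mul a b) c = mul a (mul b c)) ∧
      (∀ a : M, mul 1 a = a) ∧ (∀ a : M, mul a 1 = a) := by
  have hone : comul (R := R) (1 : M)
      = ∑ _i ∈ ({0} : Finset ℕ), (1 : M) ⊗ₜ[R] (1 : M) := by
    simp [Algebra.TensorProduct.one_def]
  refine ⟨tw r, ?_, tw_assoc r hcoc, ?_, ?_⟩
  · intro a b ι κ t u a₁ a₂ b₁ b₂ ha hb
    exact tw_repr r a b t u a₁ a₂ b₁ b₂ ha hb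
  · intro a
    rw [tw_repr r 1 a ({0} : Finset ℕ) (rep R a) (fun _ => 1) (fun _ => 1)
      Prod.fst Prod.snd hone (hrep R a)]
    simp only [Finset.sum_singleton, r.one_left, one_mul]
    exact counit_rep a
  · intro a
    rw [tw_repr r a 1 (rep R a) ({0} : Finset ℕ) Prod.fst Prod.snd
      (fun _ => 1) (fun _ => 1) (hrep R a) hone]
    simp only [Finset.sum_singleton, r.one_right, mul_one]
    exact counit_rep a
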